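/- There is a bijection between the set of even plane trees with 2n edges (plane trees in which every vertex has an even number of children) and the set of ternary trees with n internal vertices. -/
import Mathlib


/-- Plane forests in first-child/next-sibling representation: a plane tree is
identified with the forest of subtrees of its root. -/
inductive PForest : Type
  | nil : PForest
  | cons (child sibling : PForest) : PForest

namespace PForest

/-- Number of trees at the top level (= number of children of the parent node). -/
def len : PForest → ℕ
  | nil => 0
  | cons _ s => 1 + len s

/-- Total number of nodes (= number of edges of the corresponding plane tree). -/
def nodes : PForest → ℕ
  | nil => 0
  | cons c s => 1 + nodes c + nodes s

/-- Every node in the forest has an even number of children. -/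
def evenF : PForest → Prop
  | nil => True
  | cons c s => len c % 2 = 0 ∧ evenF c ∧ evenF s

end PForest

/-- Ternary trees: a single node, or a root with three ordered ternary subtrees. -/
inductive TTree : Type
  | leaf : TTree
  | node (a b c : TTree) : TTree

namespace TTree

/-- Number of internal vertices. -/
def internal : TTree → ℕ
  | leaf => 0
  | node a b c => 1 + internal a + internal b + internal c

end TTree

open PForest TTree

/-- Forest → ternary tree (junk value on invalid input). -/
def toT : PForest → TTree
  | PForest.nil => TTree.leaf
  | PForest.cons _ PForest.nil => TTree.leaf
  | PForest.cons c (PForest.cons c' s) => TTree.node (toT c) (toT c') (toT s)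

/-- Ternary tree → even forest. -/
def toF : TTree → PForest
  | TTree.leaf => PForest.nil
  | TTree.node a b c => PForest.cons (toF a) (PForest.cons (toF b) (toF c))

lemma toF_valid (t : TTree) : len (toF t) % 2 = 0 ∧ evenF (toF t) := by
  induction t with
  | leaf => simp [toF, len, evenF]
  | node a b c iha ihb ihc =>
    refine ⟨?_, iha.1, iha.2, ihb.1, ihb.2, ihc.2⟩
    show (1 + (1 + len (toF c))) % 2 = 0
    omega
-- note: evenF (cons (toF a) (cons (toF b) (toF c))) unfolds to
-- len (toF a) % 2 = 0 ∧ evenF (toF a) ∧ (len (toF b) % 2 = 0 ∧ evenF (toF b) ∧ evenF (toF c))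

lemma toF_nodes (t : TTree) : nodes (toF t) = 2 * internal t := by
  induction t with
  | leaf => simp [toF, nodes, internal]
  | node a b c iha ihb ihc =>
    simp only [toF, nodes, internal]
    omega

lemma toT_toF (t : TTree) : toT (toF t) = t := by
  induction t with
  | leaf => rfl
  | node a b c iha ihb ihc => simp [toF, toT, iha, ihb, ihc]

lemma key (f : PForest) (h1 : len f % 2 = 0) (h2 : evenF f) :
    toF (toT f) = f ∧ 2 * internal (toT f) = nodes f := by
  match f with
  | PForest.nil => simp [toT, toF, nodes, internal]
  | PForest.cons c PForest.nil =>
    exfalso; simp [len] at h1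
  | PForest.cons c (PForest.cons c' s) =>
    obtain ⟨hc, ec, hc', ec', es⟩ := h2
    have hs : len s % 2 = 0 := by
      simp only [len] at h1; omega
    have k1 := key c hc ec
    have k2 := key c' hc' ec'
    have k3 := key s hs es
    refine ⟨?_, ?_⟩
    · simp [toT, toF, k1.1, k2.1, k3.1]
    · simp only [toT, toF, nodes, internal]; omega
termination_by sizeOf f

theorem stmt_14 (n : ℕ) :
    Nonempty
      ({f : PForest // PForest.len f % 2 = 0 ∧ PForest.evenF f ∧ PForest.nodes f = 2 * n} ≃
       {t : TTree // TTree.internal t = n}) := by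
  refine ⟨{
    toFun := fun f => ⟨toT f.1, by
      have h := key f.1 f.2.1 f.2.2.1
      have := f.2.2.2
      omega⟩
    invFun := fun t => ⟨toF t.1, (toF_valid t.1).1, (toF_valid t.1).2, by
      rw [toF_nodes, t.2]⟩
    left_inv := fun f => Subtype.ext (key f.1 f.2.1 f.2.2.1).1
    right_inv := fun t => Subtype.ext (toT_toF t.1) }⟩
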